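/- arXiv:0801.3689 — 7 statements merged into one kernel-verified Lean document; each statement's English description precedes it below -/
import Mathlib

section
/- If S₀ > 0, S₃ > 0, and D < 0, then the cubic p(x) = −S₀x³ + S₁x² − S₂x + S₃ has exactly one real root, and that root is positive. Hence the network has exactly one steady state in each invariant polyhedron. -/
/-- Auxiliary: a cubic with negative discriminant cannot have two distinct real roots. -/
lemma cubic_no_two_roots
    (S₀ S₁ S₂ S₃ D : ℝ) (hS₀ : 0 < S₀)
    (hD : D = 18 * S₀ * S₁ * S₂ * S₃ - 4 * S₁ ^ 3 * S₃ + S₁ ^ 2 * S₂ ^ 2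
      - 4 * S₀ * S₂ ^ 3 - 27 * S₀ ^ 2 * S₃ ^ 2)
    (hDneg : D < 0)
    (a b : ℝ) (hab : a ≠ b)
    (hpa : -S₀ * a ^ 3 + S₁ * a ^ 2 - S₂ * a + S₃ = 0)
    (hpb : -S₀ * b ^ 3 + S₁ * b ^ 2 - S₂ * b + S₃ = 0) : False := by
  have hS₀' : S₀ ≠ 0 := ne_of_gt hS₀
  obtain ⟨c, hc⟩ : ∃ c : ℝ, S₀ * c = S₁ - S₀ * (a + b) :=
    ⟨(S₁ - S₀ * (a + b)) / S₀, by field_simp⟩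
  have hS1 : S₁ = S₀ * (a + b + c) := by linarith [hc]
  have hsub : a - b ≠ 0 := sub_ne_zero.mpr hab
  have h2 : S₂ * (a - b) = S₀ * (a * b + a * c + b * c) * (a - b) := by
    linear_combination hpb - hpa + (b ^ 2 - a ^ 2) * hc
  have hS2 : S₂ = S₀ * (a * b + a * c + b * c) := mul_right_cancel₀ hsub h2
  have hS3 : S₃ = S₀ * (a * b * c) := by
    linear_combination hpa + a * hS2 - a ^ 2 * hS1
  have hkey : D = S₀ ^ 4 * ((a - b) * (b - c) * (c - a)) ^ 2 := by
    rw [hD, hS1, hS2, hS3]; ring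
  have hnn : 0 ≤ S₀ ^ 4 * ((a - b) * (b - c) * (c - a)) ^ 2 := by positivity
  linarith [hkey ▸ hDneg]

/-- If `S₀ > 0`, `S₃ > 0` and the discriminant
`D = 18S₀S₁S₂S₃ − 4S₁³S₃ + S₁²S₂² − 4S₀S₂³ − 27S₀²S₃²` is negative, then the cubic
`p(x) = −S₀x³ + S₁x² − S₂x + S₃` has exactly one real root, and that root is
positive.  Hence the network has exactly one steady state in each invariant
polyhedron. -/
theorem cubic_unique_root_of_neg_discriminant
    (S₀ S₁ S₂ S₃ D : ℝ) (hS₀ : 0 < S₀) (hS₃ : 0 < S₃)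
    (hD : D = 18 * S₀ * S₁ * S₂ * S₃ - 4 * S₁ ^ 3 * S₃ + S₁ ^ 2 * S₂ ^ 2
      - 4 * S₀ * S₂ ^ 3 - 27 * S₀ ^ 2 * S₃ ^ 2)
    (hDneg : D < 0)
    (p : ℝ → ℝ)
    (hp : ∀ x, p x = -S₀ * x ^ 3 + S₁ * x ^ 2 - S₂ * x + S₃) :
    ∃ x : ℝ, 0 < x ∧ p x = 0 ∧ ∀ y : ℝ, p y = 0 → y = x := by
  have hpc : Continuous p := by
    have hfe : p = fun x => -S₀ * x ^ 3 + S₁ * x ^ 2 - S₂ * x + S₃ := funext hp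
    rw [hfe]; continuity
  obtain ⟨M, hMdef⟩ : ∃ M : ℝ, M = 1 + (|S₁| + |S₂| + S₃) / S₀ := ⟨_, rfl⟩
  have hdiv : 0 ≤ (|S₁| + |S₂| + S₃) / S₀ := by positivity
  have hM1 : 1 ≤ M := by rw [hMdef]; linarith
  have hMpos : 0 < M := by linarith
  have hMeq : |S₁| + |S₂| + S₃ = S₀ * (M - 1) := by
    rw [hMdef]; field_simp; ring
  have hpM : p M < 0 := by
    rw [hp]
    have h3 : 0 ≤ (|S₁| - S₁) * M ^ 2 :=
      mul_nonneg (by linarith [le_abs_self S₁]) (sq_nonneg M)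
    have h4 : 0 ≤ (|S₂| + S₂) * M :=
      mul_nonneg (by linarith [neg_abs_le S₂]) hMpos.le
    have h5 : 0 ≤ |S₂| * (M ^ 2 - M) :=
      mul_nonneg (abs_nonneg S₂) (by nlinarith)
    have h6 : 0 ≤ S₃ * (M ^ 2 - 1) :=
      mul_nonneg hS₃.le (by nlinarith)
    have h7 : 0 < S₀ * M ^ 2 := by positivity
    have h8 : (|S₁| + |S₂| + S₃) * M ^ 2 = S₀ * (M - 1) * M ^ 2 := by rw [hMeq]
    nlinarith [h3, h4, h5, h6, h7, h8]
  have hp0 : 0 < p 0 := by rw [hp]; simpa using hS₃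
  have hmem : (0 : ℝ) ∈ Set.Ioo (p M) (p 0) := ⟨hpM, hp0⟩
  obtain ⟨x, hxmem, hpx⟩ := intermediate_value_Ioo' (le_of_lt hMpos) hpc.continuousOn hmem
  refine ⟨x, hxmem.1, hpx, ?_⟩
  intro y hy
  by_contra hne
  have hroota : -S₀ * x ^ 3 + S₁ * x ^ 2 - S₂ * x + S₃ = 0 := by rw [← hp]; exact hpx
  have hrootb : -S₀ * y ^ 3 + S₁ * y ^ 2 - S₂ * y + S₃ = 0 := by rw [← hp]; exact hy
  exact cubic_no_two_roots S₀ S₁ S₂ S₃ D hS₀ hD hDneg x y (fun h => hne h.symm) hroota hrootb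
end

section
/- Suppose S₀ > 0, S₃ > 0, and D ≥ 0. Then all three complex roots of the cubic p(x) = −S₀x³ + S₁x² − S₂x + S₃ (counted with multiplicity) are real; moreover, all three roots are positive if and only if S₁ > 0 and S₂ > 0, and otherwise p has exactly one positive root (of multiplicity one) and two negative roots (counted with multiplicity). -/
open Polynomial

private lemma quad_repr (p : ℝ[X]) (h : p.natDegree ≤ 2) :
    p = C (p.coeff 2) * X ^ 2 + C (p.coeff 1) * X + C (p.coeff 0) := by
  ext n
  rcases n with _ | _ | _ | n
  · simp
  · simp
  · simp
  · rw [coeff_eq_zero_of_natDegree_lt (by omega)]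
    simp [coeff_X_pow, coeff_C]

set_option maxHeartbeats 2000000 in
/-- Suppose `S₀ > 0`, `S₃ > 0` and the discriminant `D ≥ 0`.  Then all
three complex roots of `p(x) = −S₀x³ + S₁x² − S₂x + S₃` (with multiplicity) are
real (i.e. `p` has three real roots counted with multiplicity); all three roots
are positive iff `S₁ > 0` and `S₂ > 0`; and otherwise `p` has exactly one positive
root (of multiplicity one) and two negative roots (with multiplicity). -/
theorem cubic_roots_real_and_sign_classification
    (S₀ S₁ S₂ S₃ D : ℝ) (hS₀ : 0 < S₀) (hS₃ : 0 < S₃)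
    (hD : D = 18 * S₀ * S₁ * S₂ * S₃ - 4 * S₁ ^ 3 * S₃ + S₁ ^ 2 * S₂ ^ 2
      - 4 * S₀ * S₂ ^ 3 - 27 * S₀ ^ 2 * S₃ ^ 2)
    (hDnonneg : 0 ≤ D)
    (P : ℝ[X])
    (hP : P = C (-S₀) * X ^ 3 + C S₁ * X ^ 2 + C (-S₂) * X + C S₃) :
    Multiset.card P.roots = 3 ∧
    ((∀ x ∈ P.roots, 0 < x) ↔ (0 < S₁ ∧ 0 < S₂)) ∧
    (¬(0 < S₁ ∧ 0 < S₂) →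
      Multiset.card (P.roots.filter (fun x => 0 < x)) = 1 ∧
      Multiset.card (P.roots.filter (fun x => x < 0)) = 2) := by
  have hev0 : P.eval 0 = S₃ := by simp [hP]
  have hPne : P ≠ 0 := fun h => by rw [h] at hev0; simp at hev0; linarith
  have hdeg : P.natDegree = 3 := by
    rw [hP]; compute_degree!
    exact hS₀.ne'
  -- find a positive real root by IVT
  obtain ⟨r, hr_pos, hr_root⟩ : ∃ r, 0 < r ∧ P.eval r = 0 := by
    set M : ℝ := 1 + (|S₁| + |S₂| + S₃) / S₀ with hMdef
    have hM1 : 1 ≤ M := by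
      have h : 0 ≤ (|S₁| + |S₂| + S₃) / S₀ := by positivity
      rw [hMdef]; linarith
    have hSM : S₀ * M = S₀ + (|S₁| + |S₂| + S₃) := by
      rw [hMdef, mul_add, mul_one, mul_div_assoc', mul_div_cancel_left₀ _ hS₀.ne']
    have hPM : P.eval M < 0 := by
      have hevM : P.eval M = -S₀ * M ^ 3 + S₁ * M ^ 2 + -S₂ * M + S₃ := by
        simp [hP]
      rw [hevM]
      nlinarith [le_abs_self S₁, neg_abs_le S₂, abs_nonneg S₁, abs_nonneg S₂,
        sq_nonneg M, mul_pos hS₀ (by nlinarith : (0:ℝ) < M ^ 2)]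
    have hmem : (0 : ℝ) ∈ Set.Icc (P.eval M) (P.eval 0) := by
      rw [hev0]; exact ⟨hPM.le, hS₃.le⟩
    obtain ⟨r, hrI, hr⟩ := intermediate_value_Icc' (by linarith : (0:ℝ) ≤ M)
      (P.continuous.continuousOn) hmem
    refine ⟨r, ?_, hr⟩
    rcases hrI.1.lt_or_eq with h | h
    · exact h
    · exfalso
      rw [← h] at hr
      have h0 : P.eval 0 = 0 := hr
      rw [hev0] at h0; linarith
  -- factor out (X - r)
  obtain ⟨Q, hQ⟩ : (X - C r) ∣ P := dvd_iff_isRoot.2 hr_root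
  have hQne : Q ≠ 0 := fun h => hPne (by rw [hQ, h, mul_zero])
  have hQdeg : Q.natDegree = 2 := by
    have h := natDegree_mul (X_sub_C_ne_zero r) hQne
    rw [← hQ, hdeg, natDegree_X_sub_C] at h
    omega
  set c2 := Q.coeff 2 with hc2def
  set c1 := Q.coeff 1 with hc1def
  set c0 := Q.coeff 0 with hc0def
  have hQrepr : Q = C c2 * X ^ 2 + C c1 * X + C c0 := quad_repr Q hQdeg.le
  -- compare coefficients via Cubic
  have hcube : Cubic.mk (-S₀) S₁ (-S₂) S₃ = Cubic.mk c2 (c1 - r * c2) (c0 - r * c1) (-(r * c0)) := by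
    rw [← Cubic.toPoly_injective]
    have h1 : (Cubic.mk (-S₀) S₁ (-S₂) S₃).toPoly = P := by
      rw [hP]; simp [Cubic.toPoly]
    have h2 : (Cubic.mk c2 (c1 - r * c2) (c0 - r * c1) (-(r * c0))).toPoly = P := by
      rw [hQ, hQrepr]; simp only [Cubic.toPoly, C_sub, C_mul, C_neg]; ring
    rw [h1, h2]
  have E0 : -S₀ = c2 := congrArg Cubic.a hcube
  have E1 : S₁ = c1 - r * c2 := congrArg Cubic.b hcube
  have E2 : -S₂ = c0 - r * c1 := congrArg Cubic.c hcube
  have E3 : S₃ = -(r * c0) := congrArg Cubic.d hcube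
  have hc2ne : c2 ≠ 0 := by intro h; rw [h] at E0; linarith
  -- discriminant identity
  have hDid : D = (c2 * r ^ 2 + c1 * r + c0) ^ 2 * (c1 ^ 2 - 4 * c2 * c0) := by
    have e0 : S₀ = -c2 := by linarith
    have e1 : S₁ = c1 - r * c2 := E1
    have e2 : S₂ = -(c0 - r * c1) := by linarith
    have e3 : S₃ = -(r * c0) := E3
    rw [hD, e0, e1, e2, e3]; ring
  -- find a real root s of Q
  obtain ⟨s, hs_root⟩ : ∃ s, Q.eval s = 0 := by
    by_cases hΔ : 0 ≤ c1 ^ 2 - 4 * c2 * c0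
    · obtain ⟨x, hx⟩ := exists_quadratic_eq_zero hc2ne
        ⟨Real.sqrt (c1 ^ 2 - 4 * c2 * c0), by
          rw [discrim]; exact (Real.mul_self_sqrt hΔ).symm⟩
      exact ⟨x, by rw [hQrepr]; simp; linear_combination hx⟩
    · push_neg at hΔ
      have hge : 0 ≤ (c2 * r ^ 2 + c1 * r + c0) ^ 2 * (c1 ^ 2 - 4 * c2 * c0) := hDid ▸ hDnonneg
      have hq0 : c2 * r ^ 2 + c1 * r + c0 = 0 := by
        by_contra hq
        have hq2 : 0 < (c2 * r ^ 2 + c1 * r + c0) ^ 2 := by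
          rcases lt_or_gt_of_ne hq with h | h <;> nlinarith
        nlinarith [mul_pos hq2 (neg_pos.2 hΔ)]
      exact ⟨r, by rw [hQrepr]; simp; linear_combination hq0⟩
  clear hD hDid hDnonneg
  -- factor out (X - s) from Q
  obtain ⟨L, hL⟩ : (X - C s) ∣ Q := dvd_iff_isRoot.2 hs_root
  have hLne : L ≠ 0 := fun h => hQne (by rw [hL, h, mul_zero])
  have hLdeg : L.natDegree = 1 := by
    have h := natDegree_mul (X_sub_C_ne_zero s) hLne
    rw [← hL, hQdeg, natDegree_X_sub_C] at h
    omega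
  set l1 := L.coeff 1 with hl1def
  set l0 := L.coeff 0 with hl0def
  have hLrepr : L = C l1 * X + C l0 := eq_X_add_C_of_natDegree_le_one hLdeg.le
  have hquad : Cubic.mk 0 c2 c1 c0 = Cubic.mk 0 l1 (l0 - s * l1) (-(s * l0)) := by
    rw [← Cubic.toPoly_injective]
    have h1 : (Cubic.mk 0 c2 c1 c0).toPoly = Q := by
      rw [hQrepr]; simp [Cubic.toPoly]
    have h2 : (Cubic.mk 0 l1 (l0 - s * l1) (-(s * l0))).toPoly = Q := by
      rw [hL, hLrepr]; simp only [Cubic.toPoly, C_sub, C_mul, C_neg, C_0]; ring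
    rw [h1, h2]
  have F1 : c2 = l1 := congrArg Cubic.b hquad
  have F2 : c1 = l0 - s * l1 := congrArg Cubic.c hquad
  have F3 : c0 = -(s * l0) := congrArg Cubic.d hquad
  -- third root
  set t : ℝ := -l0 / c2 with htdef
  have hl0v : l0 = -(c2 * t) := by
    rw [htdef, mul_div_assoc', mul_neg, neg_div, neg_neg, mul_div_cancel_left₀ _ hc2ne]
  have hLfac : L = C c2 * (X - C t) := by
    rw [hLrepr, ← F1, hl0v]
    simp only [C_neg, C_mul, mul_sub]
    ring
  -- full factorization and roots
  have hfac : P = (X - C r) * ((X - C s) * (C c2 * (X - C t))) := by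
    rw [hQ, hL, hLfac]
  have hroots : P.roots = {r, s, t} := by
    have hne2 : (X - C s) * (C c2 * (X - C t)) ≠ 0 := by
      intro h
      exact hPne (by rw [hfac, h, mul_zero])
    rw [hfac, roots_mul (hfac ▸ hPne), roots_mul hne2, roots_C_mul _ hc2ne,
      roots_X_sub_C, roots_X_sub_C, roots_X_sub_C]
    rfl
  -- Vieta
  have hc2v : c2 = -S₀ := E0.symm
  have hc1v : c1 = S₀ * (s + t) := by rw [F2, ← F1, hl0v, hc2v]; ring
  have hc0v : c0 = -(S₀ * (s * t)) := by rw [F3, hl0v, hc2v]; ring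
  have hS1 : S₁ = S₀ * (r + s + t) := by rw [E1, hc1v, hc2v]; ring
  have hS2 : S₂ = S₀ * (r * s + r * t + s * t) := by
    rw [hc0v, hc1v] at E2; linear_combination -E2
  have hS3 : S₃ = S₀ * (r * s * t) := by
    rw [hc0v] at E3; linear_combination E3
  have hrst : 0 < r * s * t := by
    have h0 : 0 < S₀ * (r * s * t) := by rw [← hS3]; exact hS₃
    rcases lt_trichotomy (r * s * t) 0 with h | h | h
    · exact absurd h0 (by nlinarith)
    · rw [h, mul_zero] at h0; exact absurd h0 (lt_irrefl 0)
    · exact h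
  have hst : 0 < s * t := by
    rcases lt_trichotomy (s * t) 0 with h | h | h
    · exact absurd hrst (by nlinarith [mul_pos hr_pos (neg_pos.2 h)])
    · rw [mul_assoc, h, mul_zero] at hrst; exact absurd hrst (lt_irrefl 0)
    · exact h
  -- every root is positive when S₁, S₂ > 0
  have key : 0 < S₁ → 0 < S₂ → ∀ x, P.eval x = 0 → 0 < x := by
    intro h1 h2 x hx
    have heval : -S₀ * x ^ 3 + S₁ * x ^ 2 + -S₂ * x + S₃ = 0 := by
      rw [hP] at hx; simp at hx; linarith
    rcases lt_trichotomy x 0 with hneg | hzero | hpos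
    · exfalso
      have hx' : 0 < -x := neg_pos.2 hneg
      nlinarith [mul_pos hS₀ (mul_pos (mul_pos hx' hx') hx'),
        mul_pos h1 (mul_pos hx' hx'), mul_pos h2 hx']
    · exfalso; rw [hzero] at heval; simp at heval; linarith
    · exact hpos
  have hmem_r : r ∈ P.roots := by rw [hroots]; simp
  have hmem_s : s ∈ P.roots := by rw [hroots]; simp
  have hmem_t : t ∈ P.roots := by rw [hroots]; simp
  refine ⟨?_, ⟨?_, ?_⟩, ?_⟩
  · rw [hroots]; rfl
  · intro h
    have hr' := h r hmem_r
    have hs' := h s hmem_s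
    have ht' := h t hmem_t
    constructor
    · rw [hS1]; nlinarith
    · rw [hS2]; nlinarith [mul_pos hr' hs', mul_pos hr' ht', mul_pos hs' ht']
  · rintro ⟨h1, h2⟩ x hx
    exact key h1 h2 x (isRoot_of_mem_roots hx)
  · intro h
    have hs_neg : s < 0 := by
      rcases lt_trichotomy s 0 with h' | h' | h'
      · exact h'
      · exfalso; rw [h'] at hst; simp at hst
      · exfalso
        have ht' : 0 < t := by nlinarith
        exact h ⟨by rw [hS1]; nlinarith, by
          rw [hS2]; nlinarith [mul_pos hr_pos h', mul_pos hr_pos ht', mul_pos h' ht']⟩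
    have ht_neg : t < 0 := by nlinarith
    rw [hroots]
    constructor
    · rw [show ({r, s, t} : Multiset ℝ) = r ::ₘ s ::ₘ {t} from rfl]
      simp [Multiset.filter_cons, Multiset.filter_singleton, hr_pos, asymm hs_neg, asymm ht_neg]
    · rw [show ({r, s, t} : Multiset ℝ) = r ::ₘ s ::ₘ {t} from rfl]
      simp [Multiset.filter_cons, Multiset.filter_singleton, asymm hr_pos, hs_neg, ht_neg]
end

section
/- If D > 0 and S₀ > 0, S₁ > 0, S₂ > 0, S₃ > 0, then the cubic p(x) = −S₀x³ + S₁x² − S₂x + S₃ has exactly three real roots, they are pairwise distinct, and all three are positive. Hence the network has exactly three steady states in each invariant polyhedron. -/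
set_option maxHeartbeats 2000000 in
/-- If the discriminant `D > 0` and `S₀, S₁, S₂, S₃ > 0`, then the
cubic `p(x) = −S₀x³ + S₁x² − S₂x + S₃` has exactly three real roots, pairwise
distinct and all positive.  Hence the network has exactly three steady states in
each invariant polyhedron. -/
theorem cubic_three_distinct_positive_roots
    (S₀ S₁ S₂ S₃ D : ℝ)
    (hS₀ : 0 < S₀) (hS₁ : 0 < S₁) (hS₂ : 0 < S₂) (hS₃ : 0 < S₃)
    (hD : D = 18 * S₀ * S₁ * S₂ * S₃ - 4 * S₁ ^ 3 * S₃ + S₁ ^ 2 * S₂ ^ 2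
      - 4 * S₀ * S₂ ^ 3 - 27 * S₀ ^ 2 * S₃ ^ 2)
    (hDpos : 0 < D)
    (p : ℝ → ℝ)
    (hp : ∀ x, p x = -S₀ * x ^ 3 + S₁ * x ^ 2 - S₂ * x + S₃) :
    ∃ x₁ x₂ x₃ : ℝ, x₁ ≠ x₂ ∧ x₁ ≠ x₃ ∧ x₂ ≠ x₃ ∧
      0 < x₁ ∧ 0 < x₂ ∧ 0 < x₃ ∧
      (∀ x : ℝ, p x = 0 ↔ (x = x₁ ∨ x = x₂ ∨ x = x₃)) := by
  have hpc : Continuous p := by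
    have : p = fun x => -S₀ * x ^ 3 + S₁ * x ^ 2 - S₂ * x + S₃ := funext hp
    rw [this]; continuity
  set Δ : ℝ := S₁ ^ 2 - 3 * S₀ * S₂ with hΔdef
  set N : ℝ := 2 * S₁ ^ 3 - 9 * S₀ * S₁ * S₂ + 27 * S₀ ^ 2 * S₃ with hNdef
  have hkey : 4 * Δ ^ 3 - N ^ 2 = 27 * S₀ ^ 2 * D := by rw [hΔdef, hNdef, hD]; ring
  have hΔpos : 0 < Δ := by
    nlinarith [sq_nonneg N, mul_pos (mul_pos hS₀ hS₀) hDpos, sq_nonneg Δ]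
  set s : ℝ := Real.sqrt Δ with hsdef
  have hs : s ^ 2 = Δ := Real.sq_sqrt hΔpos.le
  have hspos : 0 < s := Real.sqrt_pos.mpr hΔpos
  set r₁ : ℝ := (S₁ - s) / (3 * S₀) with hr₁
  set r₂ : ℝ := (S₁ + s) / (3 * S₀) with hr₂
  have h4 : (0:ℝ) < 3 * S₀ := by positivity
  have hsltS₁ : s < S₁ := by nlinarith
  have hr₁pos : 0 < r₁ := div_pos (by linarith) h4
  have hr₁lt₂ : r₁ < r₂ := by rw [hr₁, hr₂, div_lt_div_iff₀ h4 h4]; nlinarith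
  -- values at critical points
  have hv₁ : p r₁ = (N - 2 * Δ * s) / (27 * S₀ ^ 2) := by
    have e : p r₁ = (N - 3 * Δ * s + s ^ 3) / (27 * S₀ ^ 2) := by
      rw [hp, hr₁, hΔdef, hNdef]; field_simp; ring
    rw [e]
    have : s ^ 3 = Δ * s := by rw [← hs]; ring
    rw [this]; ring
  have hv₂ : p r₂ = (N + 2 * Δ * s) / (27 * S₀ ^ 2) := by
    have e : p r₂ = (N + 3 * Δ * s - s ^ 3) / (27 * S₀ ^ 2) := by
      rw [hp, hr₂, hΔdef, hNdef]; field_simp; ring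
    rw [e]
    have : s ^ 3 = Δ * s := by rw [← hs]; ring
    rw [this]; ring
  have hNs : N ^ 2 < (2 * Δ * s) ^ 2 := by
    have : (2 * Δ * s) ^ 2 = 4 * Δ ^ 3 := by rw [← hs]; ring
    nlinarith [mul_pos (mul_pos hS₀ hS₀) hDpos]
  have h2Δs : 0 < 2 * Δ * s := by positivity
  have hNabs := abs_lt_of_sq_lt_sq' hNs h2Δs.le
  have hpr₁ : p r₁ < 0 := by
    rw [hv₁]; apply div_neg_of_neg_of_pos _ (by positivity)
    linarith [hNabs.2]
  have hpr₂ : 0 < p r₂ := by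
    rw [hv₂]; apply div_pos _ (by positivity)
    linarith [hNabs.1]
  have hp0 : 0 < p 0 := by rw [hp]; simpa using hS₃
  -- a large point where p is negative
  set M : ℝ := r₂ + 1 + S₁ / S₀ + S₃ / S₀ with hM
  have hr₂pos : 0 < r₂ := lt_trans hr₁pos hr₁lt₂
  have hMgt : r₂ < M := by
    have h1 : 0 < S₁ / S₀ := by positivity
    have h2 : 0 < S₃ / S₀ := by positivity
    rw [hM]; linarith
  have hM1 : 1 ≤ M := by
    have h1 : 0 < S₁ / S₀ := by positivity
    have h2 : 0 < S₃ / S₀ := by positivity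
    rw [hM]; linarith
  have hMS : S₁ + S₃ ≤ S₀ * M := by
    have h0 : S₀ * M = S₀ * r₂ + S₀ + S₁ + S₃ := by rw [hM]; field_simp
    have h5 : 0 ≤ S₀ * r₂ := mul_nonneg hS₀.le hr₂pos.le
    linarith
  clear_value M s r₁ r₂
  have hpM : p M < 0 := by
    rw [hp]
    have hM0 : 0 < M := by linarith
    have h2 : S₁ - S₀ * M ≤ -S₃ := by linarith
    have h3 : M ^ 2 * (S₁ - S₀ * M) ≤ M ^ 2 * (-S₃) :=
      mul_le_mul_of_nonneg_left h2 (by positivity)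
    have h4 : 1 ≤ M ^ 2 := by nlinarith only [hM1]
    have h5 : S₃ * 1 ≤ S₃ * M ^ 2 := mul_le_mul_of_nonneg_left h4 hS₃.le
    linarith only [h3, h5, mul_pos hS₂ hM0]
  -- three roots by IVT
  obtain ⟨x₁, hx₁mem, hx₁⟩ := intermediate_value_Ioo' (le_of_lt hr₁pos)
    hpc.continuousOn (show (0:ℝ) ∈ Set.Ioo (p r₁) (p 0) from ⟨hpr₁, hp0⟩)
  obtain ⟨x₂, hx₂mem, hx₂⟩ := intermediate_value_Ioo (le_of_lt hr₁lt₂)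
    hpc.continuousOn (show (0:ℝ) ∈ Set.Ioo (p r₁) (p r₂) from ⟨hpr₁, hpr₂⟩)
  obtain ⟨x₃, hx₃mem, hx₃⟩ := intermediate_value_Ioo' (le_of_lt hMgt)
    hpc.continuousOn (show (0:ℝ) ∈ Set.Ioo (p M) (p r₂) from ⟨hpM, hpr₂⟩)
  obtain ⟨hx₁l, hx₁r⟩ := hx₁mem
  obtain ⟨hx₂l, hx₂r⟩ := hx₂mem
  obtain ⟨hx₃l, hx₃r⟩ := hx₃mem
  refine ⟨x₁, x₂, x₃, by linarith, by linarith, by linarith, hx₁l,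
    by linarith, by linarith, ?_⟩
  -- Vieta, then factorization
  have hA : -S₀ * x₁ ^ 3 + S₁ * x₁ ^ 2 - S₂ * x₁ + S₃ = 0 := by rw [← hp]; exact hx₁
  have hB : -S₀ * x₂ ^ 3 + S₁ * x₂ ^ 2 - S₂ * x₂ + S₃ = 0 := by rw [← hp]; exact hx₂
  have hC : -S₀ * x₃ ^ 3 + S₁ * x₃ ^ 2 - S₂ * x₃ + S₃ = 0 := by rw [← hp]; exact hx₃
  have hd12 : x₁ - x₂ ≠ 0 := by intro h; linarith only [h, hx₁r, hx₂l]
  have hd13 : x₁ - x₃ ≠ 0 := by intro h; linarith only [h, hx₁r, hx₂l, hx₂r, hx₃l]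
  have hd23 : x₂ - x₃ ≠ 0 := by intro h; linarith only [h, hx₂r, hx₃l]
  have hF : (x₁ - x₂) * (x₂ - x₃) * (x₁ - x₃) ≠ 0 :=
    mul_ne_zero (mul_ne_zero hd12 hd23) hd13
  have e₁ : S₁ = S₀ * (x₁ + x₂ + x₃) := by
    have key : (S₁ - S₀ * (x₁ + x₂ + x₃)) * ((x₁ - x₂) * (x₂ - x₃) * (x₁ - x₃)) = 0 := by
      linear_combination (x₂ - x₃) * hA + (x₃ - x₁) * hB + (x₁ - x₂) * hC
    have := (mul_eq_zero.mp key).resolve_right hF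
    linarith
  have e₂ : S₂ = S₀ * (x₁ * x₂ + x₁ * x₃ + x₂ * x₃) := by
    have key : (S₀ * (x₁ * x₂ + x₁ * x₃ + x₂ * x₃) - S₂) * (x₁ - x₂) = 0 := by
      linear_combination hA - hB - (x₁ - x₂) * (x₁ + x₂) * e₁
    have := (mul_eq_zero.mp key).resolve_right hd12
    linarith
  have e₃ : S₃ = S₀ * (x₁ * x₂ * x₃) := by
    linear_combination hA - x₁ ^ 2 * e₁ + x₁ * e₂
  intro x
  have hfact : p x = -S₀ * ((x - x₁) * (x - x₂) * (x - x₃)) := by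
    rw [hp, e₁, e₂, e₃]; ring
  constructor
  · intro hx0
    rw [hfact] at hx0
    rcases mul_eq_zero.mp hx0 with h | h
    · exact absurd h (by simpa using hS₀.ne')
    · rcases mul_eq_zero.mp h with h' | h'
      · rcases mul_eq_zero.mp h' with h'' | h''
        · exact Or.inl (by linarith)
        · exact Or.inr (Or.inl (by linarith))
      · exact Or.inr (Or.inr (by linarith))
  · rintro (rfl | rfl | rfl) <;> assumption
end

section
/- If D = 0, S₀ > 0, S₁ > 0, S₂ > 0, S₃ > 0, and the triple root condition 3S₀S₂ = S₁² and 27S₀²S₃ = S₁³ holds, then the cubic p(x) = −S₀x³ + S₁x² − S₂x + S₃ has exactly one real root, namely α = S₁/(3S₀) > 0, which has multiplicity three. Hence the network has exactly one steady state in each invariant polyhedron. -/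
/-- If `D = 0`, `S₀, S₁, S₂, S₃ > 0`, and the triple root condition
`3S₀S₂ = S₁²`, `27S₀²S₃ = S₁³` holds, then the cubic
`p(x) = −S₀x³ + S₁x² − S₂x + S₃` has exactly one real root, namely
`α = S₁/(3S₀) > 0`, of multiplicity three (i.e. `p(x) = −S₀(x − α)³`).
Hence the network has exactly one steady state in each invariant polyhedron. -/
theorem cubic_triple_root_case
    (S₀ S₁ S₂ S₃ D : ℝ)
    (hS₀ : 0 < S₀) (hS₁ : 0 < S₁) (hS₂ : 0 < S₂) (hS₃ : 0 < S₃)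
    (hD : D = 18 * S₀ * S₁ * S₂ * S₃ - 4 * S₁ ^ 3 * S₃ + S₁ ^ 2 * S₂ ^ 2
      - 4 * S₀ * S₂ ^ 3 - 27 * S₀ ^ 2 * S₃ ^ 2)
    (hDzero : D = 0)
    (htriple : 3 * S₀ * S₂ = S₁ ^ 2 ∧ 27 * S₀ ^ 2 * S₃ = S₁ ^ 3)
    (p : ℝ → ℝ)
    (hp : ∀ x, p x = -S₀ * x ^ 3 + S₁ * x ^ 2 - S₂ * x + S₃) :
    0 < S₁ / (3 * S₀) ∧
    (∀ x : ℝ, p x = -S₀ * (x - S₁ / (3 * S₀)) ^ 3) ∧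
    (∀ x : ℝ, p x = 0 ↔ x = S₁ / (3 * S₀)) := by
  obtain ⟨h2, h3⟩ := htriple
  have h0 : (3 : ℝ) * S₀ ≠ 0 := by positivity
  have hα : 0 < S₁ / (3 * S₀) := by positivity
  have key : ∀ x : ℝ, p x = -S₀ * (x - S₁ / (3 * S₀)) ^ 3 := by
    intro x
    rw [hp]
    have hS₂' : S₂ = S₁ ^ 2 / (3 * S₀) := by field_simp; linarith
    have hS₃' : S₃ = S₁ ^ 3 / (27 * S₀ ^ 2) := by
      have : (27 : ℝ) * S₀ ^ 2 ≠ 0 := by positivity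
      field_simp; linarith
    rw [hS₂', hS₃']
    field_simp
    ring
  refine ⟨hα, key, fun x => ?_⟩
  rw [key x]
  constructor
  · intro h
    have h3' : (x - S₁ / (3 * S₀)) ^ 3 = 0 := by
      have := hS₀.ne'
      rcases mul_eq_zero.1 h with h | h
      · exact absurd (neg_eq_zero.1 h) this
      · exact h
    have := pow_eq_zero_iff (n := 3) (by norm_num) |>.1 h3'
    linarith [sub_eq_zero.1 this]
  · intro h
    rw [h]
    ring
end

section
/- If D = 0, S₀ > 0, S₁ > 0, S₂ > 0, S₃ > 0, and the triple root condition fails (i.e., 3S₀S₂ ≠ S₁² or 27S₀²S₃ ≠ S₁³), then the cubic p(x) = −S₀x³ + S₁x² − S₂x + S₃ has exactly two distinct real roots, both positive: one simple root and one double root. Hence the network has exactly two steady states in each invariant polyhedron. -/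
/-- If `D = 0`, `S₀, S₁, S₂, S₃ > 0`, and the triple root condition
fails, then the cubic `p(x) = −S₀x³ + S₁x² − S₂x + S₃` has exactly two distinct
real roots, both positive: one double root `r` and one simple root `s`, i.e.
`p(x) = −S₀(x − r)²(x − s)` with `r ≠ s`.  Hence the network has exactly two
steady states in each invariant polyhedron. -/
theorem cubic_double_root_case
    (S₀ S₁ S₂ S₃ D : ℝ)
    (hS₀ : 0 < S₀) (hS₁ : 0 < S₁) (hS₂ : 0 < S₂) (hS₃ : 0 < S₃)
    (hD : D = 18 * S₀ * S₁ * S₂ * S₃ - 4 * S₁ ^ 3 * S₃ + S₁ ^ 2 * S₂ ^ 2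
      - 4 * S₀ * S₂ ^ 3 - 27 * S₀ ^ 2 * S₃ ^ 2)
    (hDzero : D = 0)
    (hnotriple : ¬(3 * S₀ * S₂ = S₁ ^ 2 ∧ 27 * S₀ ^ 2 * S₃ = S₁ ^ 3))
    (p : ℝ → ℝ)
    (hp : ∀ x, p x = -S₀ * x ^ 3 + S₁ * x ^ 2 - S₂ * x + S₃) :
    ∃ r s : ℝ, 0 < r ∧ 0 < s ∧ r ≠ s ∧
      (∀ x : ℝ, p x = -S₀ * (x - r) ^ 2 * (x - s)) ∧
      (∀ x : ℝ, p x = 0 ↔ (x = r ∨ x = s)) := by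
  have hD0 : 18 * S₀ * S₁ * S₂ * S₃ - 4 * S₁ ^ 3 * S₃ + S₁ ^ 2 * S₂ ^ 2
      - 4 * S₀ * S₂ ^ 3 - 27 * S₀ ^ 2 * S₃ ^ 2 = 0 := by rw [← hD]; exact hDzero
  have hS₀' : S₀ ≠ 0 := hS₀.ne'
  -- the quantity Δ₀ = S₁² - 3S₀S₂ is nonzero (otherwise triple root)
  have hΔ : S₁ ^ 2 - 3 * S₀ * S₂ ≠ 0 := by
    intro h
    apply hnotriple
    have h1 : 3 * S₀ * S₂ = S₁ ^ 2 := by linarith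
    refine ⟨h1, ?_⟩
    have hD1sq : (2 * S₁ ^ 3 - 9 * S₀ * S₁ * S₂ + 27 * S₀ ^ 2 * S₃) ^ 2 = 0 := by
      linear_combination (4 * (S₁ ^ 2 - 3 * S₀ * S₂) ^ 2) * h - 27 * S₀ ^ 2 * hD0
    have hD1 : 2 * S₁ ^ 3 - 9 * S₀ * S₁ * S₂ + 27 * S₀ ^ 2 * S₃ = 0 := by
      have := sq_eq_zero_iff.mp hD1sq
      linarith
    linear_combination hD1 - 3 * S₁ * h
  -- the double root r and the simple root s
  refine ⟨(S₁ * S₂ - 9 * S₀ * S₃) / (2 * (S₁ ^ 2 - 3 * S₀ * S₂)),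
    (S₁ ^ 3 + 9 * S₀ ^ 2 * S₃ - 4 * S₀ * S₁ * S₂) / (S₀ * (S₁ ^ 2 - 3 * S₀ * S₂)), ?_⟩
  set r : ℝ := (S₁ * S₂ - 9 * S₀ * S₃) / (2 * (S₁ ^ 2 - 3 * S₀ * S₂)) with hrdef
  set s : ℝ := (S₁ ^ 3 + 9 * S₀ ^ 2 * S₃ - 4 * S₀ * S₁ * S₂)
      / (S₀ * (S₁ ^ 2 - 3 * S₀ * S₂)) with hsdef
  -- Vieta-type identities
  have h1 : S₀ * (2 * r + s) = S₁ := by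
    rw [hrdef, hsdef]; field_simp [show S₁ ^ 2 - S₀ * S₂ * 3 ≠ 0 by ring_nf at hΔ ⊢; exact hΔ]; ring
  have h2 : S₀ * (r ^ 2 + 2 * r * s) = S₂ := by
    rw [hrdef, hsdef]; field_simp [show S₁ ^ 2 - S₀ * S₂ * 3 ≠ 0 by ring_nf at hΔ ⊢; exact hΔ]
    linear_combination (9 * S₀) * hD0
  have h3 : S₀ * (r ^ 2 * s) = S₃ := by
    rw [hrdef, hsdef]; field_simp [show S₁ ^ 2 - S₀ * S₂ * 3 ≠ 0 by ring_nf at hΔ ⊢; exact hΔ]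
    linear_combination (S₁ ^ 3 - 27 * S₀ ^ 2 * S₃) * hD0
  -- factorization
  have hfact : ∀ x : ℝ, p x = -S₀ * (x - r) ^ 2 * (x - s) := by
    intro x
    rw [hp]
    linear_combination (-(x ^ 2)) * h1 + x * h2 - h3
  -- roots are positive (the cubic is positive on (-∞, 0])
  have hpos : ∀ x : ℝ, x ≤ 0 → -S₀ * x ^ 3 + S₁ * x ^ 2 - S₂ * x + S₃ ≠ 0 := by
    intro x hx
    have t1 : 0 ≤ S₀ * (-x) * x ^ 2 :=
      mul_nonneg (mul_nonneg hS₀.le (neg_nonneg.mpr hx)) (sq_nonneg x)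
    have t2 : 0 ≤ S₁ * x ^ 2 := mul_nonneg hS₁.le (sq_nonneg x)
    have t3 : 0 ≤ S₂ * (-x) := mul_nonneg hS₂.le (neg_nonneg.mpr hx)
    nlinarith
  have hr : 0 < r := by
    by_contra h
    push_neg at h
    apply hpos r h
    have := (hp r).symm.trans (hfact r)
    linear_combination this
  have hs : 0 < s := by
    by_contra h
    push_neg at h
    apply hpos s h
    have := (hp s).symm.trans (hfact s)
    linear_combination this
  -- r ≠ s
  have hrs : r ≠ s := by
    intro h
    apply hΔ
    rw [h] at h1 h2
    linear_combination (-S₁ - 3 * S₀ * s) * h1 + 3 * S₀ * h2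
  refine ⟨hr, hs, hrs, hfact, ?_⟩
  intro x
  rw [hfact x]
  constructor
  · intro hx
    rcases mul_eq_zero.mp hx with h' | h'
    · rcases mul_eq_zero.mp h' with h'' | h''
      · exact absurd h'' (neg_ne_zero.mpr hS₀')
      · left; exact sub_eq_zero.mp (sq_eq_zero_iff.mp h'')
    · right; exact sub_eq_zero.mp h'
  · rintro (rfl | rfl) <;> ring
end

section
/- Fix nonnegative real rate constants κ_{ij} (1 ≤ i ≠ j ≤ 4) and T > 0. Let c₁* ∈ (0, T) and set x* = c₁*/(T − c₁*). If p(x*) = 0, then the derivative of the one-variable function g(c₁) = f₁(c₁, T − c₁) at c₁ = c₁* equals T·(T − c₁*)·p′(x*). In particular the sign of g′ at a steady state, and hence the stability of the steady state, depends only on the rate constants and not on T. -/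
/-- Fix nonnegative rate constants and `T > 0`.  Let `c₁* ∈ (0,T)`
and `x* = c₁*/(T − c₁*)`.  If `p(x*) = 0`, then the derivative of
`g(c₁) = f₁(c₁, T − c₁)` at `c₁ = c₁*` equals `T·(T − c₁*)·p′(x*)`.  In particular
the sign of `g′` at a steady state, hence its stability, does not depend on `T`. -/
theorem steady_state_stability_independent_of_T
    (κ₁₂ κ₁₃ κ₁₄ κ₂₁ κ₂₃ κ₂₄ κ₃₁ κ₃₂ κ₃₄ κ₄₁ κ₄₂ κ₄₃ : ℝ)
    (hκ : 0 ≤ κ₁₂ ∧ 0 ≤ κ₁₃ ∧ 0 ≤ κ₁₄ ∧ 0 ≤ κ₂₁ ∧ 0 ≤ κ₂₃ ∧ 0 ≤ κ₂₄ ∧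
          0 ≤ κ₃₁ ∧ 0 ≤ κ₃₂ ∧ 0 ≤ κ₃₄ ∧ 0 ≤ κ₄₁ ∧ 0 ≤ κ₄₂ ∧ 0 ≤ κ₄₃)
    (S₀ S₁ S₂ S₃ : ℝ)
    (hS₀ : S₀ = 2 * κ₁₂ + 3 * κ₁₃ + κ₁₄)
    (hS₁ : S₁ = κ₄₁ - κ₄₂ - 2 * κ₄₃)
    (hS₂ : S₂ = -2 * κ₂₁ + κ₂₃ - κ₂₄)
    (hS₃ : S₃ = 3 * κ₃₁ + κ₃₂ + 2 * κ₃₄)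
    (f₁ : ℝ → ℝ → ℝ)
    (hf₁ : ∀ c₁ c₂, f₁ c₁ c₂ =
      -S₀ * c₁ ^ 3 + S₁ * c₁ ^ 2 * c₂ - S₂ * c₁ * c₂ ^ 2 + S₃ * c₂ ^ 3)
    (p : ℝ → ℝ)
    (hp : ∀ x, p x = -S₀ * x ^ 3 + S₁ * x ^ 2 - S₂ * x + S₃)
    (T : ℝ) (hT : 0 < T)
    (c₁star : ℝ) (hc₁ : 0 < c₁star) (hc₁T : c₁star < T)
    (xstar : ℝ) (hx : xstar = c₁star / (T - c₁star))
    (hsteady : p xstar = 0)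
    (g : ℝ → ℝ) (hg : ∀ c₁, g c₁ = f₁ c₁ (T - c₁)) :
    deriv g c₁star = T * (T - c₁star) * deriv p xstar := by
  have hu : T - c₁star ≠ 0 := ne_of_gt (by linarith)
  have hps : -S₀ * c₁star ^ 3 + S₁ * c₁star ^ 2 * (T - c₁star)
      - S₂ * c₁star * (T - c₁star) ^ 2 + S₃ * (T - c₁star) ^ 3 = 0 := by
    have h := hsteady
    rw [hp, hx] at h
    field_simp at h
    have h3 : (T - c₁star) ^ 3 * (-S₀ * c₁star ^ 3 + S₁ * c₁star ^ 2 * (T - c₁star)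
        - S₂ * c₁star * (T - c₁star) ^ 2 + S₃ * (T - c₁star) ^ 3) = 0 := by
      linear_combination (T - c₁star) ^ 3 * h
    exact (mul_eq_zero.mp h3).resolve_left (pow_ne_zero 3 hu)
  have hx2 : xstar * (T - c₁star) = c₁star := by
    rw [hx]; field_simp
  have hpfun : p = fun x => -S₀ * x ^ 3 + S₁ * x ^ 2 - S₂ * x + S₃ := funext hp
  have hdp : deriv p xstar = -S₀ * (3 * xstar ^ 2) + S₁ * (2 * xstar) - S₂ := by
    rw [hpfun]
    have h3 := (hasDerivAt_pow 3 xstar).const_mul (-S₀)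
    have h2 := (hasDerivAt_pow 2 xstar).const_mul S₁
    have hlin := (hasDerivAt_id xstar).const_mul S₂
    have h1 := ((h3.add h2).sub hlin).add_const S₃
    have hfeq : (fun x : ℝ => -S₀ * x ^ 3 + S₁ * x ^ 2 - S₂ * x + S₃)
        = (fun x : ℝ => -S₀ * x ^ 3 + S₁ * x ^ 2 - S₂ * id x + S₃) := by
      funext y; simp only [id_eq]
    rw [hfeq, (show HasDerivAt (fun x : ℝ => -S₀ * x ^ 3 + S₁ * x ^ 2 - S₂ * id x + S₃) _ xstar from h1).deriv]; push_cast; ring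
  have hgfun : g = fun c => -S₀ * c ^ 3 + S₁ * c ^ 2 * (T - c)
      - S₂ * c * (T - c) ^ 2 + S₃ * (T - c) ^ 3 := by
    funext c; rw [hg, hf₁]
  have hdg : deriv g c₁star =
      -S₀ * (3 * c₁star ^ 2) + S₁ * (2 * c₁star * (T - c₁star) - c₁star ^ 2)
      - S₂ * ((T - c₁star) ^ 2 - 2 * c₁star * (T - c₁star))
      - S₃ * (3 * (T - c₁star) ^ 2) := by
    rw [hgfun]
    have hTc : HasDerivAt (fun c : ℝ => T - c) (-1) c₁star := by
      simpa using (hasDerivAt_id c₁star).const_sub T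
    have h3 := (hasDerivAt_pow 3 c₁star).const_mul (-S₀)
    have h2 := ((hasDerivAt_pow 2 c₁star).mul hTc).const_mul S₁
    have hq := ((hasDerivAt_id c₁star).mul (hTc.pow 2)).const_mul S₂
    have hc := (hTc.pow 3).const_mul S₃
    have h1 := ((h3.add h2).sub hq).add hc
    have hfeq : (fun c : ℝ => -S₀ * c ^ 3 + S₁ * c ^ 2 * (T - c)
        - S₂ * c * (T - c) ^ 2 + S₃ * (T - c) ^ 3)
        = (fun x : ℝ => -S₀ * x ^ 3 + S₁ * (x ^ 2 * (T - x))
          - S₂ * (id x * (T - x) ^ 2) + S₃ * (T - x) ^ 3) := by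
      funext y; simp only [id_eq]; ring
    rw [hfeq, (show HasDerivAt (fun x : ℝ => -S₀ * x ^ 3 + S₁ * (x ^ 2 * (T - x))
          - S₂ * (id x * (T - x) ^ 2) + S₃ * (T - x) ^ 3) _ c₁star from h1).deriv]; push_cast; simp only [id_eq, Pi.pow_apply]; ring
  rw [hdg, hdp]
  apply mul_left_cancel₀ hu
  linear_combination (-3 : ℝ) * hps +
    (3 * T * S₀ * (xstar * (T - c₁star) + c₁star) - 2 * T * S₁ * (T - c₁star)) * hx2
end

section
/- Let q(x) = −x³ + 6x² − 11x + 6. Then q′(1) < 0, q′(2) > 0, and q′(3) < 0. Hence for the Square network with rate constants (κ₁₂, κ₁₄, κ₂₁, κ₂₃, κ₃₂, κ₃₄, κ₄₁, κ₄₃) = (1/4, 1/2, 1, 13, 1, 2, 8, 1), the steady states with ratio c₁/c₂ equal to 1 and 3 are stable and the steady state with ratio 2 is unstable: the system is bistable. -/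
/-- Let `q(x) = −x³ + 6x² − 11x + 6`.  Then `q′(1) < 0`,
`q′(2) > 0` and `q′(3) < 0`.  Hence for the Square with rate constants
`(1/4, 1/2, 1, 13, 1, 2, 8, 1)` the steady states with ratio `c₁/c₂` equal to `1`
and `3` are stable while the one with ratio `2` is unstable: the system is
bistable. -/
theorem square_example_bistability
    (q : ℝ → ℝ) (hq : ∀ x, q x = -x ^ 3 + 6 * x ^ 2 - 11 * x + 6) :
    deriv q 1 < 0 ∧ 0 < deriv q 2 ∧ deriv q 3 < 0 := by
  have hd : ∀ x : ℝ, HasDerivAt q (-3 * x ^ 2 + 12 * x - 11) x := by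
    intro x
    have h : HasDerivAt (fun x : ℝ => -x ^ 3 + 6 * x ^ 2 - 11 * x + 6)
        (-3 * x ^ 2 + 12 * x - 11) x := by
      have := (((hasDerivAt_pow 3 x).neg.add ((hasDerivAt_pow 2 x).const_mul 6)).sub
        ((hasDerivAt_id x).const_mul 11)).add_const 6
      exact this.congr_deriv (by push_cast; ring)
    exact h.congr_of_eventuallyEq (Filter.Eventually.of_forall hq)
  rw [(hd 1).deriv, (hd 2).deriv, (hd 3).deriv]
  norm_num
end
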